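/- Let n ≥ 2, c > 0, and let L_u be the n×n Laplacian of the uniformly weighted line graph. For every integer k with 1 ≤ k ≤ n, the vector v_k ∈ ℝⁿ with entries v_k(j) = sin((2j−1)kπ/(2n+1)) for j = 1, …, n satisfies (L_u + 2c·e₁e₁ᵀ + c·e_ne_nᵀ) v_k = 2c(1 − cos(2kπ/(2n+1))) v_k. Hence the DST-6 basis vectors are eigenvectors of the generalized graph Laplacian of the line graph with a self-loop of weight 2c at the first vertex and a self-loop of weight c at the last vertex. -/

import Mathlib

open Matrix Real

def lineLaplacian (n : ℕ) (c : ℝ) : Matrix (Fin n) (Fin n) ℝ :=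
  Matrix.of fun i j =>
    if i = j then (if i.val = 0 ∨ i.val = n - 1 then c else 2 * c)
    else if i.val + 1 = j.val ∨ j.val + 1 = i.val then -c else 0

private lemma dst6_entry (n : ℕ) (c : ℝ) (h0 : 0 < n) (hl : n - 1 < n)
    (a b : ℕ) (ha : a < n) (hb : b < n) :
    (lineLaplacian n c + Matrix.single (⟨0, h0⟩ : Fin n) (⟨0, h0⟩ : Fin n) (2 * c)
      + Matrix.single (⟨n - 1, hl⟩ : Fin n) (⟨n - 1, hl⟩ : Fin n) c) (⟨a, ha⟩ : Fin n) (⟨b, hb⟩ : Fin n) =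
    (if a = b then (if a = 0 ∨ a = n - 1 then c else 2 * c)
      else if a + 1 = b ∨ b + 1 = a then -c else 0)
    + (if a = 0 ∧ b = 0 then 2 * c else 0)
    + (if a = n - 1 ∧ b = n - 1 then c else 0) := by
  simp only [Matrix.add_apply, lineLaplacian, Matrix.of_apply, Matrix.single,
    Fin.mk.injEq, eq_comm]

/-- DST-6 basis vectors are eigenvectors of the line graph Laplacian with a self-loop of weight `2c` at the first vertex and `c` at the last vertex. For `1 ≤ k ≤ n` the given vector is an eigenvector
with the stated eigenvalue. -/
theorem dst6_eigenvectors (n : ℕ) (hn : 2 ≤ n) (c : ℝ) (hc : 0 < c)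
    (k : ℕ) (hk1 : 1 ≤ k) (hk2 : k ≤ n) :
    (lineLaplacian n c + Matrix.single (⟨0, by omega⟩ : Fin n) ⟨0, by omega⟩ (2 * c) + Matrix.single (⟨n - 1, by omega⟩ : Fin n) ⟨n - 1, by omega⟩ c) *ᵥ
        (fun j : Fin n => Real.sin ((2 * (j : ℝ) + 1) * (k : ℝ) * Real.pi / (2 * n + 1))) =
      (2 * c * (1 - Real.cos (2 * (k : ℝ) * Real.pi / (2 * n + 1)))) •
        (fun j : Fin n => Real.sin ((2 * (j : ℝ) + 1) * (k : ℝ) * Real.pi / (2 * n + 1))) := by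
  have h2n : (2 * (n:ℝ) + 1) ≠ 0 := by positivity
  set θ : ℝ := (k:ℝ) * Real.pi / (2 * (n:ℝ) + 1) with hθ
  have hv : ∀ x : ℝ, (2 * x + 1) * (k : ℝ) * Real.pi / (2 * (n:ℝ) + 1) = (2 * x + 1) * θ := by
    intro x; rw [hθ]; ring
  have key : ∀ x : ℝ, Real.sin (x + 2 * θ) + Real.sin (x - 2 * θ)
      = 2 * Real.sin x * Real.cos (2 * θ) := by
    intro x; rw [Real.sin_add, Real.sin_sub]; ring
  have hcos : 2 * (k : ℝ) * Real.pi / (2 * (n:ℝ) + 1) = 2 * θ := by rw [hθ]; ring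
  funext i
  simp only [Matrix.mulVec, dotProduct, Pi.smul_apply, smul_eq_mul, hv, hcos]
  obtain ⟨iv, hiv⟩ := i
  have hE := dst6_entry n c (by omega) (by omega)
  by_cases h0 : iv = 0
  · subst h0
    have hne : (⟨0, hiv⟩ : Fin n) ≠ ⟨1, by omega⟩ := by simp [Fin.ext_iff]
    rw [← Finset.sum_subset
      (Finset.subset_univ ({(⟨0, hiv⟩ : Fin n), ⟨1, by omega⟩} : Finset (Fin n)))
      (by
        intro x _ hx
        simp only [Finset.mem_insert, Finset.mem_singleton, not_or] at hx
        obtain ⟨hx0, hx1⟩ := hx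
        obtain ⟨xv, hxv⟩ := x
        rw [hE 0 xv hiv hxv]
        have hx0' : xv ≠ 0 := fun h => hx0 (by simp [Fin.ext_iff, h])
        have hx1' : xv ≠ 1 := fun h => hx1 (by simp [Fin.ext_iff, h])
        split_ifs <;> first | omega | ring1 | (simp_all <;> omega) | simp_all)]
    rw [Finset.sum_pair hne, hE 0 0 hiv hiv, hE 0 1 hiv (by omega)]
    have h3 : Real.sin (3 * θ) = 2 * Real.sin θ * Real.cos (2 * θ) + Real.sin θ := by
      have h := key θ
      rw [show θ - 2 * θ = -θ by ring, Real.sin_neg, show θ + 2 * θ = 3 * θ by ring] at h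
      linarith
    have e1 : (if 0 = 0 then (if 0 = 0 ∨ 0 = n - 1 then c else 2 * c)
        else if 0 + 1 = 0 ∨ 0 + 1 = 0 then -c else 0)
        + (if 0 = 0 ∧ 0 = 0 then 2 * c else 0)
        + (if 0 = n - 1 ∧ 0 = n - 1 then c else 0) = 3 * c := by
      rw [if_pos (rfl : (0:ℕ) = 0), if_pos (Or.inl (rfl : (0:ℕ) = 0)),
        if_pos ⟨rfl, rfl⟩, if_neg (show ¬((0:ℕ) = n - 1 ∧ (0:ℕ) = n - 1) by omega)]
      ring1
    have e2 : (if 0 = 1 then (if 0 = 0 ∨ 0 = n - 1 then c else 2 * c)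
        else if 0 + 1 = 1 ∨ 1 + 1 = 0 then -c else 0)
        + (if 0 = 0 ∧ 1 = 0 then 2 * c else 0)
        + (if 0 = n - 1 ∧ 1 = n - 1 then c else 0) = -c := by
      rw [if_neg (show ¬(0 = 1) by omega), if_pos (show 0 + 1 = 1 ∨ 1 + 1 = 0 by omega),
        if_neg (show ¬((0:ℕ) = 0 ∧ 1 = 0) by omega),
        if_neg (show ¬((0:ℕ) = n - 1 ∧ 1 = n - 1) by omega)]
      ring1
    rw [e1, e2]
    simp only [Fin.val_mk, Nat.cast_zero, Nat.cast_one]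
    rw [show (2:ℝ) * 0 + 1 = 1 by norm_num, show (2:ℝ) * 1 + 1 = 3 by norm_num, one_mul]
    linear_combination (-c) * h3
  · by_cases hlast : iv = n - 1
    · subst hlast
      have hne : (⟨n - 2, by omega⟩ : Fin n) ≠ ⟨n - 1, hiv⟩ := by
        simp [Fin.ext_iff]; omega
      rw [← Finset.sum_subset
        (Finset.subset_univ ({(⟨n - 2, by omega⟩ : Fin n), ⟨n - 1, hiv⟩} : Finset (Fin n)))
        (by
          intro x _ hx
          simp only [Finset.mem_insert, Finset.mem_singleton, not_or] at hx
          obtain ⟨hx0, hx1⟩ := hx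
          obtain ⟨xv, hxv⟩ := x
          rw [hE (n - 1) xv hiv hxv]
          have hx0' : xv ≠ n - 2 := fun h => hx0 (by simp [Fin.ext_iff, h])
          have hx1' : xv ≠ n - 1 := fun h => hx1 (by simp [Fin.ext_iff, h])
          split_ifs <;> first | omega | ring1 | (simp_all <;> omega) | simp_all)]
      rw [Finset.sum_pair hne, hE (n - 1) (n - 2) hiv (by omega), hE (n - 1) (n - 1) hiv hiv]
      have e1 : (if n - 1 = n - 2 then (if n - 1 = 0 ∨ n - 1 = n - 1 then c else 2 * c)
          else if n - 1 + 1 = n - 2 ∨ n - 2 + 1 = n - 1 then -c else 0)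
          + (if n - 1 = 0 ∧ n - 2 = 0 then 2 * c else 0)
          + (if n - 1 = n - 1 ∧ n - 2 = n - 1 then c else 0) = -c := by
        rw [if_neg (show ¬(n - 1 = n - 2) by omega),
          if_pos (show n - 1 + 1 = n - 2 ∨ n - 2 + 1 = n - 1 by omega),
          if_neg (show ¬(n - 1 = 0 ∧ n - 2 = 0) by omega),
          if_neg (show ¬(n - 1 = n - 1 ∧ n - 2 = n - 1) by omega)]
        ring1
      have e2 : (if n - 1 = n - 1 then (if n - 1 = 0 ∨ n - 1 = n - 1 then c else 2 * c)
          else if n - 1 + 1 = n - 1 ∨ n - 1 + 1 = n - 1 then -c else 0)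
          + (if n - 1 = 0 ∧ n - 1 = 0 then 2 * c else 0)
          + (if n - 1 = n - 1 ∧ n - 1 = n - 1 then c else 0) = 2 * c := by
        rw [if_pos (rfl : n - 1 = n - 1), if_pos (Or.inr (rfl : n - 1 = n - 1)),
          if_neg (show ¬(n - 1 = 0 ∧ n - 1 = 0) by omega), if_pos ⟨rfl, rfl⟩]
        ring1
      rw [e1, e2]
      simp only [Fin.val_mk]
      have hc1 : ((n - 1 : ℕ) : ℝ) = (n : ℝ) - 1 := by
        rw [Nat.cast_sub (by omega : 1 ≤ n)]; norm_num
      have hc2 : ((n - 2 : ℕ) : ℝ) = (n : ℝ) - 2 := by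
        rw [Nat.cast_sub hn]; norm_num
      rw [hc1, hc2]
      have hz : Real.sin ((2 * ((n:ℝ) - 1) + 1) * θ + 2 * θ) = 0 := by
        have harg : (2 * ((n:ℝ) - 1) + 1) * θ + 2 * θ = (k : ℝ) * Real.pi := by
          rw [hθ]; field_simp; ring
        rw [harg, Real.sin_nat_mul_pi]
      have h := key ((2 * ((n:ℝ) - 1) + 1) * θ)
      rw [hz, show (2 * ((n:ℝ) - 1) + 1) * θ - 2 * θ = (2 * ((n:ℝ) - 2) + 1) * θ by ring] at h
      linear_combination (-c) * h
    · obtain ⟨m, rfl⟩ : ∃ m, iv = m + 1 := ⟨iv - 1, by omega⟩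
      have hm2 : m + 2 < n := by omega
      have hne1 : (⟨m, by omega⟩ : Fin n) ≠ ⟨m + 1, hiv⟩ := by simp [Fin.ext_iff]
      have hne2 : (⟨m, by omega⟩ : Fin n) ≠ ⟨m + 2, hm2⟩ := by simp [Fin.ext_iff]
      have hne3 : (⟨m + 1, hiv⟩ : Fin n) ≠ ⟨m + 2, hm2⟩ := by simp [Fin.ext_iff]
      rw [← Finset.sum_subset
        (Finset.subset_univ ({(⟨m, by omega⟩ : Fin n), ⟨m + 1, hiv⟩, ⟨m + 2, hm2⟩} :
          Finset (Fin n)))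
        (by
          intro x _ hx
          simp only [Finset.mem_insert, Finset.mem_singleton, not_or] at hx
          obtain ⟨hx0, hx1, hx2⟩ := hx
          obtain ⟨xv, hxv⟩ := x
          rw [hE (m + 1) xv hiv hxv]
          have hx0' : xv ≠ m := fun h => hx0 (by simp [Fin.ext_iff, h])
          have hx1' : xv ≠ m + 1 := fun h => hx1 (by simp [Fin.ext_iff, h])
          have hx2' : xv ≠ m + 2 := fun h => hx2 (by simp [Fin.ext_iff, h])
          split_ifs <;> first | omega | ring1 | (simp_all <;> omega) | simp_all)]
      rw [Finset.sum_insert (by simp [Finset.mem_insert, hne1, hne2]),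
        Finset.sum_pair hne3, hE (m + 1) m hiv (by omega), hE (m + 1) (m + 1) hiv hiv,
        hE (m + 1) (m + 2) hiv hm2]
      have e1 : (if m + 1 = m then (if m + 1 = 0 ∨ m + 1 = n - 1 then c else 2 * c)
          else if m + 1 + 1 = m ∨ m + 1 = m + 1 then -c else 0)
          + (if m + 1 = 0 ∧ m = 0 then 2 * c else 0)
          + (if m + 1 = n - 1 ∧ m = n - 1 then c else 0) = -c := by
        rw [if_neg (show ¬(m + 1 = m) by omega),
          if_pos (show m + 1 + 1 = m ∨ m + 1 = m + 1 by omega),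
          if_neg (show ¬(m + 1 = 0 ∧ m = 0) by omega),
          if_neg (show ¬(m + 1 = n - 1 ∧ m = n - 1) by omega)]
        ring1
      have e2 : (if m + 1 = m + 1 then (if m + 1 = 0 ∨ m + 1 = n - 1 then c else 2 * c)
          else if m + 1 + 1 = m + 1 ∨ m + 1 + 1 = m + 1 then -c else 0)
          + (if m + 1 = 0 ∧ m + 1 = 0 then 2 * c else 0)
          + (if m + 1 = n - 1 ∧ m + 1 = n - 1 then c else 0) = 2 * c := by
        rw [if_pos (rfl : m + 1 = m + 1),
          if_neg (show ¬(m + 1 = 0 ∨ m + 1 = n - 1) by omega),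
          if_neg (show ¬(m + 1 = 0 ∧ m + 1 = 0) by omega),
          if_neg (show ¬(m + 1 = n - 1 ∧ m + 1 = n - 1) by omega)]
        ring1
      have e3 : (if m + 1 = m + 2 then (if m + 1 = 0 ∨ m + 1 = n - 1 then c else 2 * c)
          else if m + 1 + 1 = m + 2 ∨ m + 2 + 1 = m + 1 then -c else 0)
          + (if m + 1 = 0 ∧ m + 2 = 0 then 2 * c else 0)
          + (if m + 1 = n - 1 ∧ m + 2 = n - 1 then c else 0) = -c := by
        rw [if_neg (show ¬(m + 1 = m + 2) by omega),
          if_pos (show m + 1 + 1 = m + 2 ∨ m + 2 + 1 = m + 1 by omega),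
          if_neg (show ¬(m + 1 = 0 ∧ m + 2 = 0) by omega),
          if_neg (show ¬(m + 1 = n - 1 ∧ m + 2 = n - 1) by omega)]
        ring1
      rw [e1, e2, e3]
      simp only [Fin.val_mk]
      push_cast
      have h := key ((2 * ((m:ℝ) + 1) + 1) * θ)
      rw [show (2 * ((m:ℝ) + 1) + 1) * θ + 2 * θ = (2 * ((m:ℝ) + 2) + 1) * θ by ring,
        show (2 * ((m:ℝ) + 1) + 1) * θ - 2 * θ = (2 * (m:ℝ) + 1) * θ by ring] at h
      linear_combination (-c) * h
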